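/- Let Ω_j ⊆ Ω be open, let δ > 0 and C_dPU > 0, and let χ : ℝ^d → ℝ be a differentiable function with |χ(x)| ≤ 1 and |∇χ(x)| ≤ C_dPU / δ for all x ∈ Ω_j. Then for all differentiable functions v, w : ℝ^d → ℝ whose values and gradients are square-integrable on Ω_j (and such that χ v and χ w have square-integrable values and gradients on Ω_j, with all relevant products integrable), the commutator bound | (v, χ w)_{1,c,Ω_j} − (χ v, w)_{1,c,Ω_j} | ≤ C_dPU · ( ν₊ / √(c̃₋ ν₋) ) · (1/δ) · ‖v‖_{1,c,Ω_j} ‖w‖_{1,c,Ω_j} holds. -/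

import Mathlib

open MeasureTheory
open scoped RealInnerProductSpace

private lemma gradient_mul' {F : Type*} [NormedAddCommGroup F] [InnerProductSpace ℝ F]
    [CompleteSpace F] {f g : F → ℝ} {x : F}
    (hf : DifferentiableAt ℝ f x) (hg : DifferentiableAt ℝ g x) :
    gradient (fun y => f y * g y) x = f x • gradient g x + g x • gradient f x := by
  unfold gradient
  rw [fderiv_fun_mul hf hg, map_add, LinearIsometryEquiv.map_smul, LinearIsometryEquiv.map_smul]

private lemma mul_integrable' {α : Type*} {m : MeasurableSpace α} {μ : Measure α}
    {f g : α → ℝ} (hf : MemLp f 2 μ) (hg : MemLp g 2 μ) :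
    Integrable (fun x => f x * g x) μ := by
  have h := L2.integrable_inner (𝕜 := ℝ) (hf.toLp f) (hg.toLp g)
  refine h.congr ?_
  filter_upwards [hf.coeFn_toLp, hg.coeFn_toLp] with x h1 h2
  simp [h1, h2, RCLike.inner_apply, mul_comm]

private lemma integral_mul_le_sqrt' {α : Type*} {m : MeasurableSpace α} {μ : Measure α}
    {f g : α → ℝ} (hf : MemLp f 2 μ) (hg : MemLp g 2 μ) :
    ∫ x, f x * g x ∂μ ≤ Real.sqrt (∫ x, f x ^ 2 ∂μ) * Real.sqrt (∫ x, g x ^ 2 ∂μ) := by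
  have h1 : ∫ x, f x * g x ∂μ = ⟪hf.toLp f, hg.toLp g⟫ := by
    rw [L2.inner_def]
    refine integral_congr_ae ?_
    filter_upwards [hf.coeFn_toLp, hg.coeFn_toLp] with x h1 h2
    simp [h1, h2, RCLike.inner_apply, mul_comm]
  have h2 : ∫ x, f x ^ 2 ∂μ = ‖hf.toLp f‖ ^ 2 := by
    rw [← real_inner_self_eq_norm_sq, L2.inner_def]
    refine integral_congr_ae ?_
    filter_upwards [hf.coeFn_toLp] with x h1
    simp [h1, RCLike.inner_apply, sq]
  have h3 : ∫ x, g x ^ 2 ∂μ = ‖hg.toLp g‖ ^ 2 := by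
    rw [← real_inner_self_eq_norm_sq, L2.inner_def]
    refine integral_congr_ae ?_
    filter_upwards [hg.coeFn_toLp] with x h1
    simp [h1, RCLike.inner_apply, sq]
  rw [h1, h2, h3, Real.sqrt_sq (norm_nonneg _), Real.sqrt_sq (norm_nonneg _)]
  exact real_inner_le_norm _ _

private lemma sqrt_cs' {a b c d : ℝ} (ha : 0 ≤ a) (hb : 0 ≤ b) (hc : 0 ≤ c) (hd : 0 ≤ d) :
    Real.sqrt a * Real.sqrt c + Real.sqrt b * Real.sqrt d
      ≤ Real.sqrt (a + b) * Real.sqrt (c + d) := by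
  have h0 : 0 ≤ Real.sqrt a * Real.sqrt c + Real.sqrt b * Real.sqrt d := by positivity
  rw [← Real.sqrt_sq h0, ← Real.sqrt_mul (add_nonneg ha hb)]
  apply Real.sqrt_le_sqrt
  have hac := Real.sq_sqrt ha
  have hbc := Real.sq_sqrt hb
  have hcc := Real.sq_sqrt hc
  have hdc := Real.sq_sqrt hd
  nlinarith [sq_nonneg (Real.sqrt a * Real.sqrt d - Real.sqrt b * Real.sqrt c)]

set_option maxHeartbeats 1000000 in
/-- commutator bound for the weighted inner product,
`|(v, χw)_{1,c,Ω_j} − (χv, w)_{1,c,Ω_j}| ≤ C_dPU (ν₊/√(c̃₋ν₋)) (1/δ) ‖v‖‖w‖`. -/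
theorem stmt12 (d : ℕ) (hd : 1 ≤ d)
    (Ω : Set (EuclideanSpace ℝ (Fin d))) (hΩo : IsOpen Ω) (hΩb : Bornology.IsBounded Ω)
    (ct ν : EuclideanSpace ℝ (Fin d) → ℝ) (hctm : Measurable ct) (hνm : Measurable ν)
    (ctlo cthi νlo νhi : ℝ)
    (hctlo : 0 < ctlo) (hct : ctlo ≤ cthi) (hνlo : 0 < νlo) (hν : νlo ≤ νhi)
    (hctbd : ∀ᵐ x ∂(volume.restrict Ω), ctlo ≤ ct x ∧ ct x ≤ cthi)
    (hνbd : ∀ᵐ x ∂(volume.restrict Ω), νlo ≤ ν x ∧ ν x ≤ νhi)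
    -- the subdomain
    (Ωj : Set (EuclideanSpace ℝ (Fin d))) (hΩj : IsOpen Ωj) (hΩjsub : Ωj ⊆ Ω)
    -- the partition of unity function
    (δ CdPU : ℝ) (hδ : 0 < δ) (hCdPU : 0 < CdPU)
    (χ : EuclideanSpace ℝ (Fin d) → ℝ) (hχ : Differentiable ℝ χ)
    (hχbd : ∀ x ∈ Ωj, |χ x| ≤ 1)
    (hχgrad : ∀ x ∈ Ωj, ‖gradient χ x‖ ≤ CdPU / δ)
    -- the functions
    (v w : EuclideanSpace ℝ (Fin d) → ℝ)
    (hv : Differentiable ℝ v) (hw : Differentiable ℝ w)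
    (hvL2 : MemLp v 2 (volume.restrict Ωj)) (hwL2 : MemLp w 2 (volume.restrict Ωj))
    (hgvL2 : MemLp (gradient v) 2 (volume.restrict Ωj))
    (hgwL2 : MemLp (gradient w) 2 (volume.restrict Ωj))
    (hχvL2 : MemLp (fun x => χ x * v x) 2 (volume.restrict Ωj))
    (hgχvL2 : MemLp (gradient fun x => χ x * v x) 2 (volume.restrict Ωj))
    (hχwL2 : MemLp (fun x => χ x * w x) 2 (volume.restrict Ωj))
    (hgχwL2 : MemLp (gradient fun x => χ x * w x) 2 (volume.restrict Ωj))
    -- integrability of the relevant products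
    (hint1 : IntegrableOn (fun x =>
      ct x * v x * (χ x * w x) + ν x * ⟪gradient v x, gradient (fun y => χ y * w y) x⟫) Ωj)
    (hint2 : IntegrableOn (fun x =>
      ct x * (χ x * v x) * w x + ν x * ⟪gradient (fun y => χ y * v y) x, gradient w x⟫) Ωj) :
    |(∫ x in Ωj,
        (ct x * v x * (χ x * w x)
          + ν x * ⟪gradient v x, gradient (fun y => χ y * w y) x⟫))
      - ∫ x in Ωj,
        (ct x * (χ x * v x) * w x
          + ν x * ⟪gradient (fun y => χ y * v y) x, gradient w x⟫)|
      ≤ CdPU * (νhi / Real.sqrt (ctlo * νlo)) * (1 / δ)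
          * Real.sqrt (∫ x in Ωj, (ct x * v x ^ 2 + ν x * ‖gradient v x‖ ^ 2))
          * Real.sqrt (∫ x in Ωj, (ct x * w x ^ 2 + ν x * ‖gradient w x‖ ^ 2)) := by
  set μ := volume.restrict Ωj with hμ
  set gv := gradient v with hgv
  set gw := gradient w with hgw
  set gχ := gradient χ with hgχdef
  -- the commutator function
  set f : EuclideanSpace ℝ (Fin d) → ℝ :=
    fun x => ν x * (w x * ⟪gv x, gχ x⟫ - v x * ⟪gw x, gχ x⟫) with hfdef
  -- pointwise identity
  have key : ∀ x,
      (ct x * v x * (χ x * w x) + ν x * ⟪gradient v x, gradient (fun y => χ y * w y) x⟫)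
        - (ct x * (χ x * v x) * w x + ν x * ⟪gradient (fun y => χ y * v y) x, gradient w x⟫)
        = f x := by
    intro x
    have e1 : ⟪gradient v x, gradient (fun y => χ y * w y) x⟫
        = χ x * ⟪gv x, gw x⟫ + w x * ⟪gv x, gχ x⟫ := by
      rw [gradient_mul' (hχ x) (hw x), inner_add_right, real_inner_smul_right,
        real_inner_smul_right]
    have e2 : ⟪gradient (fun y => χ y * v y) x, gradient w x⟫
        = χ x * ⟪gv x, gw x⟫ + v x * ⟪gw x, gχ x⟫ := by
      rw [gradient_mul' (hχ x) (hv x), inner_add_left, real_inner_smul_left,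
        real_inner_smul_left, real_inner_comm (gχ x)]
    rw [e1, e2]; simp only [hfdef]; ring
  -- rewrite the difference of integrals
  have hfint : Integrable f μ := (hint1.sub hint2).congr (Filter.Eventually.of_forall key)
  have hdiff :
      (∫ x in Ωj, (ct x * v x * (χ x * w x)
          + ν x * ⟪gradient v x, gradient (fun y => χ y * w y) x⟫))
        - ∫ x in Ωj, (ct x * (χ x * v x) * w x
          + ν x * ⟪gradient (fun y => χ y * v y) x, gradient w x⟫)
        = ∫ x in Ωj, f x := by
    rw [← integral_sub hint1 hint2]
    exact integral_congr_ae (Filter.Eventually.of_forall key)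
  rw [hdiff]
  -- transferred a.e. bounds on Ωj
  have hct' : ∀ᵐ x ∂μ, ctlo ≤ ct x ∧ ct x ≤ cthi :=
    ae_restrict_of_ae_restrict_of_subset hΩjsub hctbd
  have hν' : ∀ᵐ x ∂μ, νlo ≤ ν x ∧ ν x ≤ νhi :=
    ae_restrict_of_ae_restrict_of_subset hΩjsub hνbd
  have hmem : ∀ᵐ x ∂μ, x ∈ Ωj := ae_restrict_mem hΩj.measurableSet
  -- dominating function
  set K : ℝ := νhi * (CdPU / δ) with hK
  set h : EuclideanSpace ℝ (Fin d) → ℝ :=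
    fun x => ‖gv x‖ * ‖w x‖ + ‖v x‖ * ‖gw x‖ with hhdef
  have hP1 : Integrable (fun x => ‖gv x‖ * ‖w x‖) μ := mul_integrable' hgvL2.norm hwL2.norm
  have hP2 : Integrable (fun x => ‖v x‖ * ‖gw x‖) μ := mul_integrable' hvL2.norm hgwL2.norm
  have hhint : Integrable h μ := hP1.add hP2
  have hgint : Integrable (fun x => K * h x) μ := hhint.const_mul K
  have hfg : ∀ᵐ x ∂μ, |f x| ≤ K * h x := by
    filter_upwards [hmem, hν'] with x hx hνx
    have hgχx : ‖gχ x‖ ≤ CdPU / δ := hχgrad x hx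
    have hi1 : |⟪gv x, gχ x⟫| ≤ ‖gv x‖ * ‖gχ x‖ := abs_real_inner_le_norm _ _
    have hi2 : |⟪gw x, gχ x⟫| ≤ ‖gw x‖ * ‖gχ x‖ := abs_real_inner_le_norm _ _
    have e3 : |w x * ⟪gv x, gχ x⟫ - v x * ⟪gw x, gχ x⟫|
        ≤ ‖w x‖ * (‖gv x‖ * ‖gχ x‖) + ‖v x‖ * (‖gw x‖ * ‖gχ x‖) := by
      refine (abs_sub _ _).trans (add_le_add ?_ ?_)
      · rw [abs_mul, Real.norm_eq_abs]
        exact mul_le_mul_of_nonneg_left hi1 (abs_nonneg _)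
      · rw [abs_mul, Real.norm_eq_abs]
        exact mul_le_mul_of_nonneg_left hi2 (abs_nonneg _)
    have e4 : |ν x| ≤ νhi := by
      rw [abs_of_nonneg (le_trans hνlo.le hνx.1)]; exact hνx.2
    have e5 : ‖w x‖ * (‖gv x‖ * ‖gχ x‖) + ‖v x‖ * (‖gw x‖ * ‖gχ x‖)
        ≤ (CdPU / δ) * h x := by
      have t1 : 0 ≤ ‖w x‖ * ‖gv x‖ * (CdPU / δ - ‖gχ x‖) :=
        mul_nonneg (mul_nonneg (norm_nonneg _) (norm_nonneg _)) (sub_nonneg.mpr hgχx)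
      have t2 : 0 ≤ ‖v x‖ * ‖gw x‖ * (CdPU / δ - ‖gχ x‖) :=
        mul_nonneg (mul_nonneg (norm_nonneg _) (norm_nonneg _)) (sub_nonneg.mpr hgχx)
      simp only [hhdef]; nlinarith [t1, t2]
    calc |f x| = |ν x| * |w x * ⟪gv x, gχ x⟫ - v x * ⟪gw x, gχ x⟫| := abs_mul _ _
      _ ≤ νhi * (‖w x‖ * (‖gv x‖ * ‖gχ x‖) + ‖v x‖ * (‖gw x‖ * ‖gχ x‖)) :=
          mul_le_mul e4 e3 (abs_nonneg _) (le_trans hνlo.le (le_trans hνx.1 hνx.2))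
      _ ≤ νhi * ((CdPU / δ) * h x) :=
          mul_le_mul_of_nonneg_left e5 (le_trans hνlo.le hν)
      _ = K * h x := by rw [hK]; ring
  have step1 : |∫ x in Ωj, f x| ≤ ∫ x in Ωj, K * h x := by
    calc |∫ x in Ωj, f x| ≤ ∫ x in Ωj, |f x| := by
          simpa [Real.norm_eq_abs] using norm_integral_le_integral_norm (μ := μ) f
      _ ≤ ∫ x in Ωj, K * h x := integral_mono_ae hfint.abs hgint hfg
  -- Cauchy-Schwarz pieces
  set A1 : ℝ := ∫ x in Ωj, ‖v x‖ ^ 2 with hA1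
  set A2 : ℝ := ∫ x in Ωj, ‖gv x‖ ^ 2 with hA2
  set B1 : ℝ := ∫ x in Ωj, ‖w x‖ ^ 2 with hB1
  set B2 : ℝ := ∫ x in Ωj, ‖gw x‖ ^ 2 with hB2
  have hA1n : 0 ≤ A1 := integral_nonneg fun x => by positivity
  have hA2n : 0 ≤ A2 := integral_nonneg fun x => by positivity
  have hB1n : 0 ≤ B1 := integral_nonneg fun x => by positivity
  have hB2n : 0 ≤ B2 := integral_nonneg fun x => by positivity
  have cs1 : ∫ x in Ωj, ‖gv x‖ * ‖w x‖ ≤ Real.sqrt A2 * Real.sqrt B1 :=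
    integral_mul_le_sqrt' hgvL2.norm hwL2.norm
  have cs2 : ∫ x in Ωj, ‖v x‖ * ‖gw x‖ ≤ Real.sqrt A1 * Real.sqrt B2 :=
    integral_mul_le_sqrt' hvL2.norm hgwL2.norm
  have hhsum : ∫ x in Ωj, h x = (∫ x in Ωj, ‖gv x‖ * ‖w x‖) + ∫ x in Ωj, ‖v x‖ * ‖gw x‖ :=
    integral_add hP1 hP2
  -- weighted Cauchy-Schwarz in ℝ²
  set s : ℝ := Real.sqrt (ctlo * νlo) with hs
  have hspos : 0 < s := Real.sqrt_pos.mpr (mul_pos hctlo hνlo)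
  have hws : s * (Real.sqrt A2 * Real.sqrt B1 + Real.sqrt A1 * Real.sqrt B2)
      ≤ Real.sqrt (ctlo * A1 + νlo * A2) * Real.sqrt (ctlo * B1 + νlo * B2) := by
    have base := sqrt_cs' (mul_nonneg hνlo.le hA2n) (mul_nonneg hctlo.le hA1n)
      (mul_nonneg hctlo.le hB1n) (mul_nonneg hνlo.le hB2n)
    calc s * (Real.sqrt A2 * Real.sqrt B1 + Real.sqrt A1 * Real.sqrt B2)
        = Real.sqrt (νlo * A2) * Real.sqrt (ctlo * B1)
          + Real.sqrt (ctlo * A1) * Real.sqrt (νlo * B2) := by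
          rw [hs, Real.sqrt_mul hctlo.le, Real.sqrt_mul hνlo.le, Real.sqrt_mul hctlo.le,
            Real.sqrt_mul hctlo.le, Real.sqrt_mul hνlo.le]
          ring
      _ ≤ Real.sqrt (νlo * A2 + ctlo * A1) * Real.sqrt (ctlo * B1 + νlo * B2) := base
      _ = Real.sqrt (ctlo * A1 + νlo * A2) * Real.sqrt (ctlo * B1 + νlo * B2) := by
          rw [add_comm (νlo * A2)]
  -- compare weighted lower integrals with the energy norms
  have hsqgv : Integrable (fun x => ‖gv x‖ ^ 2) μ :=
    (memLp_two_iff_integrable_sq_norm hgvL2.1).mp hgvL2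
  have hsqgw : Integrable (fun x => ‖gw x‖ ^ 2) μ :=
    (memLp_two_iff_integrable_sq_norm hgwL2.1).mp hgwL2
  have hsqv : Integrable (fun x => v x ^ 2) μ := hvL2.integrable_sq
  have hsqw : Integrable (fun x => w x ^ 2) μ := hwL2.integrable_sq
  have hctbd' : ∀ᵐ x ∂μ, ‖ct x‖ ≤ cthi := by
    filter_upwards [hct'] with x hx
    rw [Real.norm_eq_abs, abs_of_nonneg (le_trans hctlo.le hx.1)]; exact hx.2
  have hνbd' : ∀ᵐ x ∂μ, ‖ν x‖ ≤ νhi := by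
    filter_upwards [hν'] with x hx
    rw [Real.norm_eq_abs, abs_of_nonneg (le_trans hνlo.le hx.1)]; exact hx.2
  have hhi_v : Integrable (fun x => ct x * v x ^ 2 + ν x * ‖gv x‖ ^ 2) μ :=
    (hsqv.bdd_mul hctm.aestronglyMeasurable hctbd').add
      (hsqgv.bdd_mul hνm.aestronglyMeasurable hνbd')
  have hhi_w : Integrable (fun x => ct x * w x ^ 2 + ν x * ‖gw x‖ ^ 2) μ :=
    (hsqw.bdd_mul hctm.aestronglyMeasurable hctbd').add
      (hsqgw.bdd_mul hνm.aestronglyMeasurable hνbd')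
  have hlo_v : Integrable (fun x => ctlo * v x ^ 2 + νlo * ‖gv x‖ ^ 2) μ :=
    (hsqv.const_mul _).add (hsqgv.const_mul _)
  have hlo_w : Integrable (fun x => ctlo * w x ^ 2 + νlo * ‖gw x‖ ^ 2) μ :=
    (hsqw.const_mul _).add (hsqgw.const_mul _)
  have hmono_v : ctlo * A1 + νlo * A2
      ≤ ∫ x in Ωj, (ct x * v x ^ 2 + ν x * ‖gv x‖ ^ 2) := by
    have e : ctlo * A1 + νlo * A2 = ∫ x in Ωj, (ctlo * v x ^ 2 + νlo * ‖gv x‖ ^ 2) := by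
      rw [integral_add (hsqv.const_mul _) (hsqgv.const_mul _), integral_const_mul,
        integral_const_mul, hA1, hA2]
      simp_rw [Real.norm_eq_abs, sq_abs]
      rfl
    rw [e]
    refine integral_mono_ae hlo_v hhi_v ?_
    filter_upwards [hct', hν'] with x h1 h2
    have := sq_nonneg (v x); have := sq_nonneg ‖gv x‖
    nlinarith [h1.1, h2.1]
  have hmono_w : ctlo * B1 + νlo * B2
      ≤ ∫ x in Ωj, (ct x * w x ^ 2 + ν x * ‖gw x‖ ^ 2) := by
    have e : ctlo * B1 + νlo * B2 = ∫ x in Ωj, (ctlo * w x ^ 2 + νlo * ‖gw x‖ ^ 2) := by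
      rw [integral_add (hsqw.const_mul _) (hsqgw.const_mul _), integral_const_mul,
        integral_const_mul, hB1, hB2]
      simp_rw [Real.norm_eq_abs, sq_abs]
      rfl
    rw [e]
    refine integral_mono_ae hlo_w hhi_w ?_
    filter_upwards [hct', hν'] with x h1 h2
    have := sq_nonneg (w x); have := sq_nonneg ‖gw x‖
    nlinarith [h1.1, h2.1]
  set Nv : ℝ := Real.sqrt (∫ x in Ωj, (ct x * v x ^ 2 + ν x * ‖gv x‖ ^ 2)) with hNv
  set Nw : ℝ := Real.sqrt (∫ x in Ωj, (ct x * w x ^ 2 + ν x * ‖gw x‖ ^ 2)) with hNw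
  have hsv : Real.sqrt (ctlo * A1 + νlo * A2) ≤ Nv := Real.sqrt_le_sqrt hmono_v
  have hsw : Real.sqrt (ctlo * B1 + νlo * B2) ≤ Nw := Real.sqrt_le_sqrt hmono_w
  have hNvn : 0 ≤ Nv := Real.sqrt_nonneg _
  have hNwn : 0 ≤ Nw := Real.sqrt_nonneg _
  have hslo_vn : 0 ≤ Real.sqrt (ctlo * A1 + νlo * A2) := Real.sqrt_nonneg _
  -- put it together
  have hKn : 0 ≤ K := mul_nonneg (le_trans hνlo.le hν) (div_nonneg hCdPU.le hδ.le)
  have hfinal : ∫ x in Ωj, K * h x ≤ K * ((Nv * Nw) / s) := by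
    rw [integral_const_mul]
    refine mul_le_mul_of_nonneg_left ?_ hKn
    rw [hhsum]
    have step : (∫ x in Ωj, ‖gv x‖ * ‖w x‖) + ∫ x in Ωj, ‖v x‖ * ‖gw x‖
        ≤ Real.sqrt A2 * Real.sqrt B1 + Real.sqrt A1 * Real.sqrt B2 := add_le_add cs1 cs2
    refine step.trans ?_
    rw [le_div_iff₀ hspos]
    calc (Real.sqrt A2 * Real.sqrt B1 + Real.sqrt A1 * Real.sqrt B2) * s
        = s * (Real.sqrt A2 * Real.sqrt B1 + Real.sqrt A1 * Real.sqrt B2) := by ring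
      _ ≤ Real.sqrt (ctlo * A1 + νlo * A2) * Real.sqrt (ctlo * B1 + νlo * B2) := hws
      _ ≤ Nv * Nw := mul_le_mul hsv hsw (Real.sqrt_nonneg _) hNvn
  calc |∫ x in Ωj, f x| ≤ ∫ x in Ωj, K * h x := step1
    _ ≤ K * ((Nv * Nw) / s) := hfinal
    _ = CdPU * (νhi / s) * (1 / δ) * Nv * Nw := by
        rw [hK]; field_simp
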